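/- Let Q_s and Q_t be i.i.d. N(0, Σ) with Σ = ΓΓᵀ + AAᵀ positive definite, and let M = ΓΓᵀ. Then E[(Q_sᵀ M Q_t)²/(‖Q_s‖²‖Q_t‖²)] ≤ tr(Σ^{1/2}MΣMΣ^{1/2}) / (λ_min(Σ)² N²) and in particular is O(tr(ΓᵀΣΓΓᵀΣΓ)/tr(Σ)²) when all eigenvalues of Σ are of the same order. -/

import Mathlib

open MeasureTheory ProbabilityTheory Matrix

noncomputable def stdmu (N : ℕ) : Measure (Fin N → ℝ) := Measure.pi fun _ => gaussianReal 0 1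

instance (N : ℕ) : IsProbabilityMeasure (stdmu N) := by unfold stdmu; infer_instance

lemma gaussian_map_neg : (gaussianReal 0 1).map (fun x : ℝ => -x) = gaussianReal 0 1 := by
  have h := gaussianReal_map_const_mul (μ := 0) (v := 1) (-1)
  have : (fun x : ℝ => -1 * x) = (fun x : ℝ => -x) := by funext x; ring
  rw [this] at h
  rw [h]
  norm_num

lemma mp_negcoord {N : ℕ} (i : Fin N) :
    MeasurePreserving (fun g : Fin N → ℝ => fun j => if j = i then -g j else g j)
      (stdmu N) (stdmu N) := by
  have := MeasureTheory.measurePreserving_pi (fun _ : Fin N => gaussianReal 0 1)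
    (fun _ : Fin N => gaussianReal 0 1)
    (f := fun j : Fin N => fun x : ℝ => if j = i then -x else x) ?_
  · exact this
  · intro j
    by_cases h : j = i
    · simpa [h] using (⟨(measurable_neg : Measurable (fun x:ℝ => -x)), gaussian_map_neg⟩ :
        MeasurePreserving (fun x : ℝ => -x) (gaussianReal 0 1) (gaussianReal 0 1))
    · convert MeasurePreserving.id (gaussianReal 0 1) using 1
      funext x; simp [h]

lemma mp_perm {N : ℕ} (e : Equiv.Perm (Fin N)) :
    MeasurePreserving (fun g : Fin N → ℝ => g ∘ e) (stdmu N) (stdmu N) := by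
  have h := MeasureTheory.measurePreserving_piCongrLeft
    (fun _ : Fin N => gaussianReal 0 1) e.symm
  have : ⇑(MeasurableEquiv.piCongrLeft (fun _ : Fin N => ℝ) e.symm)
      = fun g : Fin N → ℝ => g ∘ e := by
    funext g
    ext j
    simp [MeasurableEquiv.piCongrLeft, Equiv.piCongrLeft]
  rw [this] at h
  exact h

noncomputable def fik {N : ℕ} (i k : Fin N) (g : Fin N → ℝ) : ℝ := g i * g k / ∑ j, g j ^ 2

lemma fik_meas {N : ℕ} (i k : Fin N) : Measurable (fik i k) := by
  apply Measurable.div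
  · exact ((measurable_pi_apply i).mul (measurable_pi_apply k))
  · exact Finset.measurable_sum _ (fun j _ => (measurable_pi_apply j).pow measurable_const)

lemma sq_le_sum {N : ℕ} (i : Fin N) (g : Fin N → ℝ) : g i ^ 2 ≤ ∑ j, g j ^ 2 :=
  Finset.single_le_sum (fun j _ => sq_nonneg (g j)) (Finset.mem_univ i)

lemma fik_bound {N : ℕ} (i k : Fin N) (g : Fin N → ℝ) : |fik i k g| ≤ 1 := by
  unfold fik
  rcases eq_or_lt_of_le (Finset.sum_nonneg (fun j _ => sq_nonneg (g j))) with h | h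
  · rw [← h, div_zero]; norm_num
  · rw [abs_div, div_le_one (by rwa [abs_of_pos h])]
    rw [abs_of_pos h, abs_mul]
    calc |g i| * |g k| ≤ (g i ^ 2 + g k ^ 2) / 2 := by
          nlinarith [sq_nonneg (|g i| - |g k|), sq_abs (g i), sq_abs (g k)]
      _ ≤ ∑ j, g j ^ 2 := by
          have := sq_le_sum i g; have := sq_le_sum k g; linarith

lemma fik_integrable {N : ℕ} (i k : Fin N) : Integrable (fik i k) (stdmu N) := by
  refine (integrable_const (1 : ℝ)).mono' ((fik_meas i k).aestronglyMeasurable) ?_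
  exact Filter.Eventually.of_forall fun g => by simpa [Real.norm_eq_abs] using fik_bound i k g

lemma fik_int_zero {N : ℕ} {i k : Fin N} (h : i ≠ k) : ∫ g, fik i k g ∂(stdmu N) = 0 := by
  have hmp := mp_negcoord (N := N) i
  have h1 : ∫ g, fik i k g ∂(stdmu N)
      = ∫ g, fik i k ((fun g : Fin N → ℝ => fun j => if j = i then -g j else g j) g) ∂(stdmu N) := by
    conv_lhs => rw [← hmp.map_eq]
    exact integral_map hmp.measurable.aemeasurable (fik_meas i k).aestronglyMeasurable
  have h2 : ∀ g : Fin N → ℝ,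
      fik i k ((fun g : Fin N → ℝ => fun j => if j = i then -g j else g j) g) = - fik i k g := by
    intro g
    unfold fik
    have hs : ∑ j, (if j = i then -g j else g j) ^ 2 = ∑ j, g j ^ 2 := by
      apply Finset.sum_congr rfl
      intro j _
      split <;> ring
    simp only [hs, if_pos rfl, if_neg (Ne.symm h), if_true]
    ring
  simp only [h2] at h1
  rw [integral_neg] at h1
  linarith


lemma fik_diag_eq {N : ℕ} (i i' : Fin N) :
    ∫ g, fik i i g ∂(stdmu N) = ∫ g, fik i' i' g ∂(stdmu N) := by
  have hmp := mp_perm (N := N) (Equiv.swap i i')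
  conv_lhs => rw [← hmp.map_eq]
  rw [integral_map hmp.measurable.aemeasurable (fik_meas i i).aestronglyMeasurable]
  apply integral_congr_ae
  filter_upwards with g
  show fik i i (g ∘ (Equiv.swap i i')) = fik i' i' g
  unfold fik
  have hs : ∑ j, (g ∘ (Equiv.swap i i')) j ^ 2 = ∑ j, g j ^ 2 :=
    Equiv.sum_comp (Equiv.swap i i') (fun j => g j ^ 2)
  rw [hs]
  simp [Function.comp, Equiv.swap_apply_left]

lemma sum_sq_ne_zero_ae {N : ℕ} (hN : 0 < N) :
    ∀ᵐ g ∂(stdmu N), ∑ j, g j ^ 2 ≠ 0 := by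
  rw [ae_iff]
  refine measure_mono_null (t := Function.eval (⟨0, hN⟩ : Fin N) ⁻¹' {0}) ?_ ?_
  · intro g hg
    simp only [Set.mem_setOf_eq, not_not] at hg
    have h0 := (Finset.sum_eq_zero_iff_of_nonneg
      (fun j _ => sq_nonneg (g j))).mp hg ⟨0, hN⟩ (Finset.mem_univ _)
    have : g ⟨0, hN⟩ = 0 := by nlinarith [sq_nonneg (g ⟨0, hN⟩)]
    exact this
  · exact Measure.pi_eval_preimage_null _
      ((gaussianReal_absolutelyContinuous 0 one_ne_zero) (measure_singleton 0))

lemma fik_diag_int {N : ℕ} (hN : 0 < N) (i : Fin N) :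
    ∫ g, fik i i g ∂(stdmu N) = 1 / N := by
  have hsum : ∑ k : Fin N, ∫ g, fik k k g ∂(stdmu N) = 1 := by
    rw [← integral_finset_sum _ (fun k _ => fik_integrable k k)]
    have : ∫ g, (∑ k : Fin N, fik k k g) ∂(stdmu N) = ∫ _, (1 : ℝ) ∂(stdmu N) := by
      apply integral_congr_ae
      filter_upwards [sum_sq_ne_zero_ae hN] with g hg
      unfold fik
      rw [← Finset.sum_div]
      have : ∑ k : Fin N, g k * g k = ∑ j, g j ^ 2 := by
        apply Finset.sum_congr rfl; intro j _; ring
      rw [this, div_self hg]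
    rw [this, integral_const]
    simp
  have hconst : ∀ k : Fin N, ∫ g, fik k k g ∂(stdmu N) = ∫ g, fik i i g ∂(stdmu N) :=
    fun k => fik_diag_eq k i
  rw [Finset.sum_congr rfl (fun k _ => hconst k), Finset.sum_const] at hsum
  simp only [Finset.card_univ, Fintype.card_fin, nsmul_eq_mul] at hsum
  field_simp
  linarith

lemma fik_int {N : ℕ} (hN : 0 < N) (i k : Fin N) :
    ∫ g, fik i k g ∂(stdmu N) = if i = k then (1 : ℝ) / (N : ℝ) else 0 := by
  by_cases h : i = k
  · subst h; rw [if_pos rfl]; exact fik_diag_int hN i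
  · rw [if_neg h]; exact fik_int_zero h

lemma main_integral {N : ℕ} (hN : 0 < N) (B : Matrix (Fin N) (Fin N) ℝ) :
    ∫ g : (Fin N → ℝ) × (Fin N → ℝ),
      (g.1 ⬝ᵥ B.mulVec g.2) ^ 2 / ((∑ j, g.1 j ^ 2) * (∑ j, g.2 j ^ 2))
      ∂((stdmu N).prod (stdmu N)) = (∑ i, ∑ j, B i j ^ 2) / (N : ℝ) ^ 2 := by
  have hpt : ∀ g : (Fin N → ℝ) × (Fin N → ℝ),
      (g.1 ⬝ᵥ B.mulVec g.2) ^ 2 / ((∑ j, g.1 j ^ 2) * (∑ j, g.2 j ^ 2))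
      = ∑ p : Fin N × Fin N, ∑ q : Fin N × Fin N,
          (B p.1 p.2 * B q.1 q.2) * (fik p.1 q.1 g.1 * fik p.2 q.2 g.2) := by
    intro g
    have hdot : g.1 ⬝ᵥ B.mulVec g.2
        = ∑ p : Fin N × Fin N, B p.1 p.2 * g.1 p.1 * g.2 p.2 := by
      rw [Fintype.sum_prod_type]
      simp only [dotProduct, Matrix.mulVec, Finset.mul_sum]
      apply Finset.sum_congr rfl; intro i _
      apply Finset.sum_congr rfl; intro j _
      ring
    rw [sq, hdot, Finset.sum_mul_sum]
    rw [Finset.sum_div]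
    apply Finset.sum_congr rfl; intro p _
    rw [Finset.sum_div]
    apply Finset.sum_congr rfl; intro q _
    unfold fik
    rw [div_eq_mul_inv, div_eq_mul_inv, div_eq_mul_inv, mul_inv]
    ring
  simp only [hpt]
  rw [integral_finset_sum _ (fun p _ => integrable_finset_sum _ (fun q _ =>
    (((fik_integrable p.1 q.1).const_mul (B p.1 p.2 * B q.1 q.2)).mul_prod
        (fik_integrable p.2 q.2)).congr
      (Filter.Eventually.of_forall (fun z => by ring))))]
  have : ∀ p : Fin N × Fin N,
      (∫ z : (Fin N → ℝ) × (Fin N → ℝ), ∑ q : Fin N × Fin N,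
        (B p.1 p.2 * B q.1 q.2) * (fik p.1 q.1 z.1 * fik p.2 q.2 z.2)
        ∂((stdmu N).prod (stdmu N)))
      = ∑ q : Fin N × Fin N, (B p.1 p.2 * B q.1 q.2) *
          ((if p.1 = q.1 then 1 / (N : ℝ) else 0) * (if p.2 = q.2 then 1 / (N : ℝ) else 0)) := by
    intro p
    rw [integral_finset_sum _ (fun q _ =>
      (((fik_integrable p.1 q.1).const_mul (B p.1 p.2 * B q.1 q.2)).mul_prod
          (fik_integrable p.2 q.2)).congr
        (Filter.Eventually.of_forall (fun z => by ring)))]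
    apply Finset.sum_congr rfl; intro q _
    have : (fun z : (Fin N → ℝ) × (Fin N → ℝ) =>
        (B p.1 p.2 * B q.1 q.2) * (fik p.1 q.1 z.1 * fik p.2 q.2 z.2))
        = fun z => ((B p.1 p.2 * B q.1 q.2) * fik p.1 q.1 z.1) * fik p.2 q.2 z.2 := by
      funext z; ring
    rw [this]
    rw [integral_prod_mul (f := fun x => (B p.1 p.2 * B q.1 q.2) * fik p.1 q.1 x)
      (g := fik p.2 q.2), integral_const_mul, fik_int hN, fik_int hN, mul_assoc]
  simp only [this]
  have hNne : (N : ℝ) ≠ 0 := Nat.cast_ne_zero.mpr hN.ne'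
  rw [Fintype.sum_prod_type, Finset.sum_div]
  refine Finset.sum_congr rfl fun i _ => ?_
  rw [Finset.sum_div]
  refine Finset.sum_congr rfl fun j _ => ?_
  rw [Fintype.sum_prod_type]
  simp only [mul_ite, mul_zero, mul_one, ite_mul, zero_mul,
    Finset.sum_ite_eq, Finset.mem_univ, if_true]
  field_simp

lemma quad_lower {N : ℕ} {Sig : Matrix (Fin N) (Fin N) ℝ} (hSig : Sig.PosDef)
    {c : ℝ} (hc : ∀ i, c ≤ hSig.1.eigenvalues i) (g : Fin N → ℝ) :
    c * ∑ j, g j ^ 2 ≤ g ⬝ᵥ Sig.mulVec g := by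
  have hps : (Sig - c • 1).PosSemidef := by
    have hco : (RCLike.ofReal ∘ hSig.1.eigenvalues : Fin N → ℝ) = hSig.1.eigenvalues := by
      funext i; simp
    have hU : (hSig.1.eigenvectorUnitary : Matrix (Fin N) (Fin N) ℝ)
        * star (hSig.1.eigenvectorUnitary : Matrix (Fin N) (Fin N) ℝ) = 1 :=
      (Matrix.mem_unitaryGroup_iff).mp hSig.1.eigenvectorUnitary.2
    have h1 : Sig - c • 1
        = (hSig.1.eigenvectorUnitary : Matrix (Fin N) (Fin N) ℝ)
          * (Matrix.diagonal (fun i => hSig.1.eigenvalues i - c))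
          * (hSig.1.eigenvectorUnitary : Matrix (Fin N) (Fin N) ℝ)ᴴ := by
      conv_lhs => rw [hSig.1.spectral_theorem, hco]
      rw [Unitary.conjStarAlgAut_apply]
      rw [Matrix.star_eq_conjTranspose] at hU ⊢
      have hd : Matrix.diagonal (fun i => hSig.1.eigenvalues i - c)
          = Matrix.diagonal hSig.1.eigenvalues - c • 1 := by
        ext i j
        rcases eq_or_ne i j with rfl | h
        · simp [Matrix.one_apply_eq]
        · simp [Matrix.diagonal_apply_ne _ h, Matrix.one_apply_ne h]
      rw [hd, Matrix.mul_sub, Matrix.sub_mul, Matrix.mul_smul, Matrix.smul_mul, mul_one, hU]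
    rw [h1]
    exact (Matrix.PosSemidef.diagonal
      (fun i => sub_nonneg.mpr (hc i))).mul_mul_conjTranspose_same _
  have h2 := hps.dotProduct_mulVec_nonneg g
  have h3 : star g = g := by funext i; simp
  rw [h3, Matrix.sub_mulVec, dotProduct_sub] at h2
  have h4 : g ⬝ᵥ (c • (1 : Matrix (Fin N) (Fin N) ℝ)).mulVec g = c * ∑ j, g j ^ 2 := by
    rw [Matrix.smul_mulVec, Matrix.one_mulVec, dotProduct_smul]
    simp only [smul_eq_mul]
    congr 1
    simp [dotProduct, sq]
  rw [h4] at h2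
  linarith

lemma expand_pt {N : ℕ} (B : Matrix (Fin N) (Fin N) ℝ) (g : (Fin N → ℝ) × (Fin N → ℝ)) :
    (g.1 ⬝ᵥ B.mulVec g.2) ^ 2 / ((∑ j, g.1 j ^ 2) * (∑ j, g.2 j ^ 2))
    = ∑ p : Fin N × Fin N, ∑ q : Fin N × Fin N,
        (B p.1 p.2 * B q.1 q.2) * (fik p.1 q.1 g.1 * fik p.2 q.2 g.2) := by
  have hdot : g.1 ⬝ᵥ B.mulVec g.2
      = ∑ p : Fin N × Fin N, B p.1 p.2 * g.1 p.1 * g.2 p.2 := by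
    rw [Fintype.sum_prod_type]
    simp only [dotProduct, Matrix.mulVec, Finset.mul_sum]
    apply Finset.sum_congr rfl; intro i _
    apply Finset.sum_congr rfl; intro j _
    ring
  rw [sq, hdot, Finset.sum_mul_sum]
  rw [Finset.sum_div]
  apply Finset.sum_congr rfl; intro p _
  rw [Finset.sum_div]
  apply Finset.sum_congr rfl; intro q _
  unfold fik
  rw [div_eq_mul_inv, div_eq_mul_inv, div_eq_mul_inv, mul_inv]
  ring

lemma F_integrable {N : ℕ} (B : Matrix (Fin N) (Fin N) ℝ) :
    Integrable (fun g : (Fin N → ℝ) × (Fin N → ℝ) =>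
      (g.1 ⬝ᵥ B.mulVec g.2) ^ 2 / ((∑ j, g.1 j ^ 2) * (∑ j, g.2 j ^ 2)))
      ((stdmu N).prod (stdmu N)) := by
  apply Integrable.congr (f := fun g : (Fin N → ℝ) × (Fin N → ℝ) =>
    ∑ p : Fin N × Fin N, ∑ q : Fin N × Fin N,
      (B p.1 p.2 * B q.1 q.2) * (fik p.1 q.1 g.1 * fik p.2 q.2 g.2))
  · exact integrable_finset_sum _ (fun p _ => integrable_finset_sum _ (fun q _ =>
      (((fik_integrable p.1 q.1).const_mul (B p.1 p.2 * B q.1 q.2)).mul_prod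
          (fik_integrable p.2 q.2)).congr
        (Filter.Eventually.of_forall (fun z => by ring))))
  · exact Filter.Eventually.of_forall (fun g => (expand_pt B g).symm)

/-- For i.i.d. Gaussian vectors `Q_s, Q_t ∼ N(0, Σ)` with `Σ = ΓΓᵀ + AAᵀ` positive definite
(realized as `Q = Σ^{1/2} g` for independent standard Gaussians) and `M = ΓΓᵀ`,
`E[(Q_sᵀ M Q_t)² / (‖Q_s‖² ‖Q_t‖²)] ≤ tr(Σ^{1/2} M Σ M Σ^{1/2}) / (λ_min(Σ)² N²)`. -/
theorem gaussian_bilinear_sign_moment_bound {N r : ℕ} (hN : 0 < N)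
    (Γ : Matrix (Fin N) (Fin r) ℝ) (A : Matrix (Fin N) (Fin N) ℝ)
    (Sig : Matrix (Fin N) (Fin N) ℝ) (hSigdef : Sig = Γ * Γᵀ + A * Aᵀ)
    (hSig : Sig.PosDef)
    (S : Matrix (Fin N) (Fin N) ℝ) (hS : S.PosSemidef) (hSS : S * S = Sig)
    (lamMin : ℝ) (hlam : lamMin = ⨅ i, hSig.1.eigenvalues i) :
    (∫ g : (Fin N → ℝ) × (Fin N → ℝ),
        ((S.mulVec g.1) ⬝ᵥ ((Γ * Γᵀ).mulVec (S.mulVec g.2))) ^ 2 /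
          ((∑ k, (S.mulVec g.1 k) ^ 2) * (∑ k, (S.mulVec g.2 k) ^ 2))
        ∂((Measure.pi fun _ : Fin N => gaussianReal 0 1).prod
            (Measure.pi fun _ : Fin N => gaussianReal 0 1))) ≤
      (S * (Γ * Γᵀ) * Sig * (Γ * Γᵀ) * S).trace / (lamMin ^ 2 * (N : ℝ) ^ 2) := by
  haveI : Nonempty (Fin N) := ⟨⟨0, hN⟩⟩
  set M : Matrix (Fin N) (Fin N) ℝ := Γ * Γᵀ with hM
  set B : Matrix (Fin N) (Fin N) ℝ := S * M * S with hB
  have hmeaseq : (Measure.pi fun _ : Fin N => gaussianReal 0 1) = stdmu N := rfl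
  rw [hmeaseq]
  -- symmetry facts
  have hSsymm : Sᵀ = S := by
    rw [← Matrix.conjTranspose_eq_transpose_of_trivial]; exact hS.1
  have hMsymm : Mᵀ = M := by
    rw [hM, Matrix.transpose_mul, Matrix.transpose_transpose]
  have hBsymm : Bᵀ = B := by
    rw [hB, Matrix.transpose_mul, Matrix.transpose_mul, hSsymm, hMsymm, Matrix.mul_assoc]
    simp only [hM, Matrix.mul_assoc]
  -- eigenvalue facts
  have hle : ∀ i, lamMin ≤ hSig.1.eigenvalues i := by
    intro i; rw [hlam]
    exact ciInf_le (Set.Finite.bddBelow (Set.finite_range _)) i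
  have hcpos : 0 < lamMin := by
    obtain ⟨i, hi⟩ := exists_eq_ciInf_of_finite (f := fun i => hSig.1.eigenvalues i)
    rw [hlam, ← hi]; exact hSig.eigenvalues_pos i
  have hNne : (N : ℝ) ≠ 0 := Nat.cast_ne_zero.mpr hN.ne'
  -- vecMul facts
  have hSg : ∀ x : Fin N → ℝ, S.mulVec x = Matrix.vecMul x S := by
    intro x
    calc S.mulVec x = Sᵀᵀ.mulVec x := by rw [Matrix.transpose_transpose]
      _ = Matrix.vecMul x Sᵀ := Matrix.mulVec_transpose _ _
      _ = Matrix.vecMul x S := by rw [hSsymm]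
  have hdotrw : ∀ g : (Fin N → ℝ) × (Fin N → ℝ),
      (S.mulVec g.1) ⬝ᵥ (M.mulVec (S.mulVec g.2)) = g.1 ⬝ᵥ B.mulVec g.2 := by
    intro g
    rw [Matrix.mulVec_mulVec, Matrix.dotProduct_mulVec, hSg g.1, Matrix.vecMul_vecMul,
      ← Matrix.mul_assoc, ← Matrix.dotProduct_mulVec]
  have hnorm : ∀ x : Fin N → ℝ, ∑ k, (S.mulVec x k) ^ 2 = x ⬝ᵥ Sig.mulVec x := by
    intro x
    have h1 : ∑ k, (S.mulVec x k) ^ 2 = (S.mulVec x) ⬝ᵥ (S.mulVec x) := by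
      simp [dotProduct, sq]
    rw [h1, Matrix.dotProduct_mulVec, hSg x, Matrix.vecMul_vecMul, hSS,
      ← Matrix.dotProduct_mulVec]
  -- pointwise bound
  set F : (Fin N → ℝ) × (Fin N → ℝ) → ℝ := fun g =>
    (g.1 ⬝ᵥ B.mulVec g.2) ^ 2 / ((∑ j, g.1 j ^ 2) * (∑ j, g.2 j ^ 2)) with hF
  set f : (Fin N → ℝ) × (Fin N → ℝ) → ℝ := fun g =>
    ((S.mulVec g.1) ⬝ᵥ (M.mulVec (S.mulVec g.2))) ^ 2 /
      ((∑ k, (S.mulVec g.1 k) ^ 2) * (∑ k, (S.mulVec g.2 k) ^ 2)) with hf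
  have hsum_zero : ∀ x : Fin N → ℝ, (∑ j, x j ^ 2) = 0 → x = 0 := by
    intro x hx
    funext j
    have := (Finset.sum_eq_zero_iff_of_nonneg
      (fun j _ => sq_nonneg (x j))).mp hx j (Finset.mem_univ _)
    have : x j = 0 := by nlinarith [sq_nonneg (x j)]
    simpa using this
  have hptbd : ∀ g, f g ≤ (1 / lamMin ^ 2) * F g := by
    intro g
    rw [hf, hF]
    simp only
    rw [hdotrw g]
    by_cases h1 : (∑ j, g.1 j ^ 2) = 0
    · have hg1 : g.1 = 0 := hsum_zero _ h1
      simp [hg1, Matrix.mulVec_zero, zero_dotProduct]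
    by_cases h2 : (∑ j, g.2 j ^ 2) = 0
    · have hg2 : g.2 = 0 := hsum_zero _ h2
      simp [hg2, Matrix.mulVec_zero, dotProduct_zero]
    have hn1 : 0 < ∑ j, g.1 j ^ 2 :=
      lt_of_le_of_ne (Finset.sum_nonneg fun j _ => sq_nonneg _) (Ne.symm h1)
    have hn2 : 0 < ∑ j, g.2 j ^ 2 :=
      lt_of_le_of_ne (Finset.sum_nonneg fun j _ => sq_nonneg _) (Ne.symm h2)
    have hD1 : lamMin * ∑ j, g.1 j ^ 2 ≤ ∑ k, (S.mulVec g.1 k) ^ 2 := by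
      rw [hnorm]; exact quad_lower hSig hle g.1
    have hD2 : lamMin * ∑ j, g.2 j ^ 2 ≤ ∑ k, (S.mulVec g.2 k) ^ 2 := by
      rw [hnorm]; exact quad_lower hSig hle g.2
    have key : (g.1 ⬝ᵥ B.mulVec g.2) ^ 2 /
        ((∑ k, (S.mulVec g.1 k) ^ 2) * (∑ k, (S.mulVec g.2 k) ^ 2))
        ≤ (g.1 ⬝ᵥ B.mulVec g.2) ^ 2 /
          ((lamMin * ∑ j, g.1 j ^ 2) * (lamMin * ∑ j, g.2 j ^ 2)) := by
      gcongr
      all_goals positivity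
    refine key.trans (le_of_eq ?_)
    rw [one_div_mul_eq_div, div_div]
    congr 1
    ring
  -- integrability
  have hscaled : Integrable (fun g => (1 / lamMin ^ 2) * F g) ((stdmu N).prod (stdmu N)) :=
    (F_integrable B).const_mul _
  have hmeasS : ∀ (T : Matrix (Fin N) (Fin N) ℝ) (k : Fin N),
      Measurable (fun x : Fin N → ℝ => T.mulVec x k) := by
    intro T k
    unfold Matrix.mulVec dotProduct
    exact Finset.measurable_sum _ (fun j _ => (measurable_pi_apply j).const_mul _)
  have hf_meas : Measurable f := by
    rw [hf]
    apply Measurable.div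
    · apply Measurable.pow _ measurable_const
      simp only [Matrix.mulVec_mulVec]
      unfold dotProduct
      exact Finset.measurable_sum _ (fun k _ =>
        ((hmeasS S k).comp measurable_fst).mul ((hmeasS (M * S) k).comp measurable_snd))
    · exact (Finset.measurable_sum _ (fun k _ =>
        ((hmeasS S k).comp measurable_fst).pow measurable_const)).mul
        (Finset.measurable_sum _ (fun k _ =>
          ((hmeasS S k).comp measurable_snd).pow measurable_const))
  have hf_int : Integrable f ((stdmu N).prod (stdmu N)) := by
    refine hscaled.mono' hf_meas.aestronglyMeasurable ?_
    filter_upwards with g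
    have h0 : 0 ≤ f g := by
      rw [hf]
      apply div_nonneg (sq_nonneg _)
      apply mul_nonneg <;> exact Finset.sum_nonneg fun k _ => sq_nonneg _
    rw [Real.norm_eq_abs, abs_of_nonneg h0]
    exact hptbd g
  have hint := integral_mono hf_int hscaled hptbd
  rw [integral_const_mul, main_integral hN B] at hint
  have htr : (S * M * Sig * M * S).trace = ∑ i, ∑ j, B i j ^ 2 := by
    have hBB : S * M * Sig * M * S = B * B := by
      rw [← hSS, hB]; simp only [Matrix.mul_assoc]
    rw [hBB, Matrix.trace]
    simp only [Matrix.diag_apply, Matrix.mul_apply]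
    apply Finset.sum_congr rfl; intro i _
    apply Finset.sum_congr rfl; intro j _
    have hji : B j i = B i j := by
      calc B j i = Bᵀ i j := (Matrix.transpose_apply B i j).symm
        _ = B i j := by rw [hBsymm]
    rw [hji, sq]
  refine hint.trans (le_of_eq ?_)
  rw [htr]
  field_simp
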